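/- Dobrushin-type stability estimate for the linear partially kinetic system: for i ∈ {1,2}, let (r_i(t), μ_i(t)) ∈ ℝ^{n_r} × P¹(ℝ^{n_q}) solve m_eff r̈_i = −γ_r r_i + N_real G_r^T γ_q ∫ q dμ_i(t), where m_eff = M_r + N_real G_r^T M_q G_r (invertible), and μ_i(t) = (Q_i(t,·))_*μ_i^{in} with Q_i(t,q) = −G_r(r_i(t) − r_i^{in}) + q, with initial data r_i(0)=r_i^{in}, ṙ_i(0)=s_i^{in}, μ_i(0)=μ_i^{in}. Then there exist constants C, L > 0 independent of the initial data such that for all t ≥ 0: ‖r₁(t) − r₂(t)‖ + ‖ṙ₁(t) − ṙ₂(t)‖ + W₁(μ₁(t), μ₂(t)) ≤ C e^{Lt} ( ‖r₁^{in} − r₂^{in}‖ + ‖s₁^{in} − s₂^{in}‖ + W₁(μ₁^{in}, μ₂^{in}) ). -/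

import Mathlib

open MeasureTheory
open scoped RealInnerProductSpace

/-- Monge–Kantorovich (Wasserstein-1) distance via Kantorovich–Rubinstein duality. -/
noncomputable def W1 {n : ℕ} (μ ν : Measure (EuclideanSpace ℝ (Fin n))) : ℝ :=
  ⨆ φ : {φ : EuclideanSpace ℝ (Fin n) → ℝ // LipschitzWith 1 φ},
    |(∫ q, φ.1 q ∂μ) - ∫ q, φ.1 q ∂ν|

section W1aux
variable {n : ℕ} {μ ν : Measure (EuclideanSpace ℝ (Fin n))}

lemma lip_integrable [IsProbabilityMeasure μ] (hμ : Integrable (fun q => q) μ)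
    {φ : EuclideanSpace ℝ (Fin n) → ℝ} (hφ : LipschitzWith 1 φ) : Integrable φ μ := by
  have hb : ∀ q, ‖φ q‖ ≤ ‖(fun q : EuclideanSpace ℝ (Fin n) => ‖φ 0‖ + ‖q‖) q‖ := by
    intro q
    have h1 : ‖φ q - φ 0‖ ≤ ‖q‖ := by
      have := hφ.dist_le_mul q 0
      simpa [Real.dist_eq, dist_eq_norm] using this
    have : ‖φ q‖ ≤ ‖φ 0‖ + ‖q‖ := by
      calc ‖φ q‖ = ‖φ 0 + (φ q - φ 0)‖ := by ring_nf
        _ ≤ ‖φ 0‖ + ‖φ q - φ 0‖ := norm_add_le _ _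
        _ ≤ ‖φ 0‖ + ‖q‖ := by linarith
    calc ‖φ q‖ ≤ ‖φ 0‖ + ‖q‖ := this
      _ ≤ ‖‖φ 0‖ + ‖q‖‖ := le_abs_self _
  exact Integrable.mono ((integrable_const (‖φ 0‖)).add hμ.norm)
    hφ.continuous.aestronglyMeasurable (ae_of_all _ hb)

lemma abs_integral_sub_le [IsProbabilityMeasure μ] [IsProbabilityMeasure ν]
    (hμ : Integrable (fun q => q) μ) (hν : Integrable (fun q => q) ν)
    {φ : EuclideanSpace ℝ (Fin n) → ℝ} (hφ : LipschitzWith 1 φ) :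
    |(∫ q, φ q ∂μ) - ∫ q, φ q ∂ν| ≤ (∫ q, ‖q‖ ∂μ) + ∫ q, ‖q‖ ∂ν := by
  have key : ∀ (κ : Measure (EuclideanSpace ℝ (Fin n))), IsProbabilityMeasure κ →
      Integrable (fun q => q) κ → |(∫ q, φ q ∂κ) - φ 0| ≤ ∫ q, ‖q‖ ∂κ := by
    intro κ hκ hi
    have hint : Integrable φ κ := lip_integrable hi hφ
    have h1 : (∫ q, φ q ∂κ) - φ 0 = ∫ q, (φ q - φ 0) ∂κ := by
      rw [integral_sub hint (integrable_const _), integral_const]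
      simp
    rw [h1]
    calc |∫ q, (φ q - φ 0) ∂κ| ≤ ∫ q, |φ q - φ 0| ∂κ := by
          simpa [Real.norm_eq_abs] using
            norm_integral_le_integral_norm (fun q => φ q - φ 0) (μ := κ)
      _ ≤ ∫ q, ‖q‖ ∂κ := by
          apply integral_mono (hint.sub (integrable_const _)).abs hi.norm
          intro q
          have := hφ.dist_le_mul q 0
          simpa [Real.dist_eq, dist_eq_norm] using this
  calc |(∫ q, φ q ∂μ) - ∫ q, φ q ∂ν|
      ≤ |(∫ q, φ q ∂μ) - φ 0| + |(∫ q, φ q ∂ν) - φ 0| := by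
        have := abs_sub_le (∫ q, φ q ∂μ) (φ 0) (∫ q, φ q ∂ν)
        rw [abs_sub_comm (φ 0)] at this
        exact this
    _ ≤ (∫ q, ‖q‖ ∂μ) + ∫ q, ‖q‖ ∂ν := add_le_add (key μ ‹_› hμ) (key ν ‹_› hν)

instance W1_nonempty_index :
    Nonempty {φ : EuclideanSpace ℝ (Fin n) → ℝ // LipschitzWith 1 φ} :=
  ⟨⟨fun _ => 0, (LipschitzWith.const 0).weaken zero_le_one⟩⟩

variable [IsProbabilityMeasure μ] [IsProbabilityMeasure ν]

lemma W1_bddAbove (hμ : Integrable (fun q => q) μ) (hν : Integrable (fun q => q) ν) :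
    BddAbove (Set.range fun φ : {φ : EuclideanSpace ℝ (Fin n) → ℝ // LipschitzWith 1 φ} =>
      |(∫ q, φ.1 q ∂μ) - ∫ q, φ.1 q ∂ν|) := by
  refine ⟨(∫ q, ‖q‖ ∂μ) + ∫ q, ‖q‖ ∂ν, ?_⟩
  rintro x ⟨φ, rfl⟩
  exact abs_integral_sub_le hμ hν φ.2

lemma le_W1 (hμ : Integrable (fun q => q) μ) (hν : Integrable (fun q => q) ν)
    {φ : EuclideanSpace ℝ (Fin n) → ℝ} (hφ : LipschitzWith 1 φ) :
    |(∫ q, φ q ∂μ) - ∫ q, φ q ∂ν| ≤ W1 μ ν :=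
  le_ciSup (W1_bddAbove hμ hν) (⟨φ, hφ⟩ : {φ : EuclideanSpace ℝ (Fin n) → ℝ // LipschitzWith 1 φ})

lemma W1_nonneg (hμ : Integrable (fun q => q) μ) (hν : Integrable (fun q => q) ν) :
    0 ≤ W1 μ ν := by
  have := le_W1 hμ hν (φ := fun _ => (0:ℝ)) ((LipschitzWith.const 0).weaken zero_le_one)
  simpa using this

omit [IsProbabilityMeasure μ] [IsProbabilityMeasure ν] in
lemma W1_le {c : ℝ}
    (h : ∀ φ : EuclideanSpace ℝ (Fin n) → ℝ, LipschitzWith 1 φ →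
      |(∫ q, φ q ∂μ) - ∫ q, φ q ∂ν| ≤ c) : W1 μ ν ≤ c :=
  ciSup_le fun φ => h φ.1 φ.2

lemma moment_diff_le (hμ : Integrable (fun q => q) μ) (hν : Integrable (fun q => q) ν) :
    ‖(∫ q, q ∂μ) - ∫ q, q ∂ν‖ ≤ W1 μ ν := by
  set v : EuclideanSpace ℝ (Fin n) := (∫ q, q ∂μ) - ∫ q, q ∂ν with hv
  rcases eq_or_ne v 0 with h0 | h0
  · rw [h0, norm_zero]; exact W1_nonneg hμ hν
  · set u : EuclideanSpace ℝ (Fin n) := ‖v‖⁻¹ • v with hu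
    have hlip : LipschitzWith 1 (fun q => inner ℝ u q : EuclideanSpace ℝ (Fin n) → ℝ) := by
      apply LipschitzWith.of_dist_le_mul
      intro p q
      rw [Real.dist_eq, dist_eq_norm]
      have : (inner ℝ u p : ℝ) - inner ℝ u q = inner ℝ u (p - q) := (inner_sub_right u p q).symm
      rw [this]
      calc |(inner ℝ u (p - q) : ℝ)| ≤ ‖u‖ * ‖p - q‖ := abs_real_inner_le_norm u (p - q)
        _ ≤ 1 * ‖p - q‖ := by
          apply mul_le_mul_of_nonneg_right _ (norm_nonneg _)
          rw [hu, norm_smul, norm_inv, norm_norm]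
          rcases eq_or_ne (‖v‖) 0 with h|h
          · simp [h]
          · rw [inv_mul_cancel₀ h]
    have hi1 : (∫ q, (inner ℝ u q : ℝ) ∂μ) = inner ℝ u (∫ q, q ∂μ) :=
      ((innerSL ℝ u).integral_comp_comm hμ)
    have hi2 : (∫ q, (inner ℝ u q : ℝ) ∂ν) = inner ℝ u (∫ q, q ∂ν) :=
      ((innerSL ℝ u).integral_comp_comm hν)
    have huv : (inner ℝ u v : ℝ) = ‖v‖ := by
      rw [hu, real_inner_smul_left, real_inner_self_eq_norm_sq]
      field_simp [h0]
    calc ‖v‖ = (inner ℝ u v : ℝ) := huv.symm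
      _ = (∫ q, (inner ℝ u q : ℝ) ∂μ) - ∫ q, (inner ℝ u q : ℝ) ∂ν := by
          rw [hi1, hi2, hv, inner_sub_right]
      _ ≤ |(∫ q, (inner ℝ u q : ℝ) ∂μ) - ∫ q, (inner ℝ u q : ℝ) ∂ν| := le_abs_self _
      _ ≤ W1 μ ν := le_W1 hμ hν hlip

end W1aux

section mapaux
variable {n : ℕ} {μ : Measure (EuclideanSpace ℝ (Fin n))} [IsProbabilityMeasure μ]
  (a : EuclideanSpace ℝ (Fin n))

omit [IsProbabilityMeasure μ] in
lemma integral_map_translate {F : Type*} [NormedAddCommGroup F] [NormedSpace ℝ F]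
    (ψ : EuclideanSpace ℝ (Fin n) → F) (hψ : Continuous ψ) :
    (∫ q, ψ q ∂(Measure.map (fun q => a + q) μ)) = ∫ q, ψ (a + q) ∂μ :=
  integral_map (by fun_prop) (hψ.aestronglyMeasurable)

lemma integrable_map_translate (hμ : Integrable (fun q => q) μ) :
    Integrable (fun q => q) (Measure.map (fun q => a + q) μ) := by
  have h := (integrable_map_measure (g := fun q : EuclideanSpace ℝ (Fin n) => q)
    (μ := μ) (f := fun q => a + q)
    continuous_id.aestronglyMeasurable (by fun_prop)).mpr
  exact h ((integrable_const a).add hμ)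

lemma moment_map_translate (hμ : Integrable (fun q => q) μ) :
    (∫ q, q ∂(Measure.map (fun q => a + q) μ)) = a + ∫ q, q ∂μ := by
  rw [integral_map_translate a (fun q => q) continuous_id]
  rw [integral_add (integrable_const a) hμ, integral_const]
  simp
end mapaux

lemma meff_equiv {nr nq : ℕ}
    (Mr : EuclideanSpace ℝ (Fin nr) →L[ℝ] EuclideanSpace ℝ (Fin nr))
    (Mq : EuclideanSpace ℝ (Fin nq) →L[ℝ] EuclideanSpace ℝ (Fin nq))
    (Gr : EuclideanSpace ℝ (Fin nr) →L[ℝ] EuclideanSpace ℝ (Fin nq))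
    (Nreal : ℝ) (hNreal : 0 < Nreal)
    (hMr_pos : ∀ x, x ≠ 0 → 0 < ⟪x, Mr x⟫)
    (hMq_pos : ∀ x, x ≠ 0 → 0 < ⟪x, Mq x⟫) :
    ∃ e : EuclideanSpace ℝ (Fin nr) ≃L[ℝ] EuclideanSpace ℝ (Fin nr),
      ∀ x, e x = (Mr + Nreal • ((ContinuousLinearMap.adjoint Gr).comp (Mq.comp Gr))) x := by
  set m := Mr + Nreal • ((ContinuousLinearMap.adjoint Gr).comp (Mq.comp Gr)) with hm
  have hpos : ∀ x, x ≠ 0 → 0 < ⟪x, m x⟫ := by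
    intro x hx
    have h1 : ⟪x, m x⟫ = ⟪x, Mr x⟫ + Nreal * ⟪Gr x, Mq (Gr x)⟫ := by
      simp only [hm, ContinuousLinearMap.add_apply, ContinuousLinearMap.smul_apply,
        ContinuousLinearMap.comp_apply, inner_add_right, inner_smul_right]
      rw [ContinuousLinearMap.adjoint_inner_right]
    have h2 : 0 ≤ ⟪Gr x, Mq (Gr x)⟫ := by
      rcases eq_or_ne (Gr x) 0 with h | h
      · simp [h]
      · exact (hMq_pos _ h).le
    rw [h1]
    have := hMr_pos x hx
    nlinarith [mul_nonneg hNreal.le h2]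
  have hinj : Function.Injective m := by
    intro x y hxy
    by_contra hne
    have hx : x - y ≠ 0 := sub_ne_zero.mpr hne
    have := hpos _ hx
    rw [map_sub, hxy, sub_self, inner_zero_right] at this
    exact lt_irrefl 0 this
  have hs : Function.Surjective (m : EuclideanSpace ℝ (Fin nr) →ₗ[ℝ] EuclideanSpace ℝ (Fin nr)) :=
    LinearMap.injective_iff_surjective.mp hinj
  exact ⟨(LinearEquiv.ofBijective (m : EuclideanSpace ℝ (Fin nr) →ₗ[ℝ] EuclideanSpace ℝ (Fin nr))
    ⟨hinj, hs⟩).toContinuousLinearEquiv, fun x => by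
      simp [LinearEquiv.coe_toContinuousLinearEquiv]; rfl⟩

set_option maxHeartbeats 2000000 in
/-- Dobrushin's stability estimate for linear partially kinetic systems: there are
constants `C, L > 0`, independent of the initial data, such that any two solutions of
the linear partially kinetic system satisfy the exponential stability estimate. -/
theorem dobrushin_stability {nr nq : ℕ}
    (Mr γr : EuclideanSpace ℝ (Fin nr) →L[ℝ] EuclideanSpace ℝ (Fin nr))
    (Mq γq : EuclideanSpace ℝ (Fin nq) →L[ℝ] EuclideanSpace ℝ (Fin nq))
    (Gr : EuclideanSpace ℝ (Fin nr) →L[ℝ] EuclideanSpace ℝ (Fin nq))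
    (Nreal : ℝ) (hNreal : 0 < Nreal)
    (hMr_sym : ∀ x y, ⟪Mr x, y⟫ = ⟪x, Mr y⟫)
    (hMr_pos : ∀ x, x ≠ 0 → 0 < ⟪x, Mr x⟫)
    (hMq_sym : ∀ x y, ⟪Mq x, y⟫ = ⟪x, Mq y⟫)
    (hMq_pos : ∀ x, x ≠ 0 → 0 < ⟪x, Mq x⟫) :
    ∃ C > (0 : ℝ), ∃ L > (0 : ℝ),
      ∀ (r₁ r₂ : ℝ → EuclideanSpace ℝ (Fin nr))
        (μ₁ μ₂ : ℝ → Measure (EuclideanSpace ℝ (Fin nq))),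
        ContDiff ℝ 2 r₁ → ContDiff ℝ 2 r₂ →
        (∀ t, IsProbabilityMeasure (μ₁ t)) → (∀ t, IsProbabilityMeasure (μ₂ t)) →
        Integrable (fun q => q) (μ₁ 0) → Integrable (fun q => q) (μ₂ 0) →
        (∀ t, (Mr + Nreal • ((ContinuousLinearMap.adjoint Gr).comp (Mq.comp Gr)))
            (deriv (deriv r₁) t)
            = -γr (r₁ t) + Nreal • (ContinuousLinearMap.adjoint Gr)
                (γq (∫ q, q ∂ (μ₁ t)))) →
        (∀ t, (Mr + Nreal • ((ContinuousLinearMap.adjoint Gr).comp (Mq.comp Gr)))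
            (deriv (deriv r₂) t)
            = -γr (r₂ t) + Nreal • (ContinuousLinearMap.adjoint Gr)
                (γq (∫ q, q ∂ (μ₂ t)))) →
        (∀ t, μ₁ t = Measure.map (fun q => -Gr (r₁ t - r₁ 0) + q) (μ₁ 0)) →
        (∀ t, μ₂ t = Measure.map (fun q => -Gr (r₂ t - r₂ 0) + q) (μ₂ 0)) →
        ∀ t : ℝ, 0 ≤ t →
          ‖r₁ t - r₂ t‖ + ‖deriv r₁ t - deriv r₂ t‖ + W1 (μ₁ t) (μ₂ t)
            ≤ C * Real.exp (L * t) *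
              (‖r₁ 0 - r₂ 0‖ + ‖deriv r₁ 0 - deriv r₂ 0‖ + W1 (μ₁ 0) (μ₂ 0)) := by
  classical
  obtain ⟨e, he⟩ := meff_equiv Mr Mq Gr Nreal hNreal hMr_pos hMq_pos
  set E := EuclideanSpace ℝ (Fin nr)
  set s : ℝ := ‖(e.symm : E →L[ℝ] E)‖ with hs
  have hs0 : 0 ≤ s := norm_nonneg _
  set g : ℝ := ‖Gr‖ with hg
  have hg0 : 0 ≤ g := norm_nonneg _
  set cA : ℝ := Nreal * ‖ContinuousLinearMap.adjoint Gr‖ * ‖γq‖ with hcA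
  have hcA0 : 0 ≤ cA := by positivity
  set K : ℝ := s * (‖γr‖ + cA * g) + 1 with hK
  have hK1 : 1 ≤ K := by
    have : 0 ≤ s * (‖γr‖ + cA * g) := by positivity
    linarith
  have hK0 : 0 < K := lt_of_lt_of_le one_pos hK1
  set B : ℝ := s * cA * (g + 1) with hB
  have hB0 : 0 ≤ B := by positivity
  set C : ℝ := (2 + g) * (1 + B / K) + (1 + g) with hC
  have hC0 : 0 < C := by positivity
  refine ⟨C, hC0, K, hK0, ?_⟩
  intro r₁ r₂ μ₁ μ₂ hr₁ hr₂ hp₁ hp₂ hi₁ hi₂ hode₁ hode₂ hmap₁ hmap₂ t ht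
  haveI := hp₁ 0; haveI := hp₂ 0; haveI := hp₁ t; haveI := hp₂ t
  -- differentiability
  have hdd₁ : Differentiable ℝ r₁ ∧ Differentiable ℝ (deriv r₁) := by
    have h2 : ContDiff ℝ ((1:ℕ) + 1) r₁ := by exact_mod_cast hr₁
    obtain ⟨hd, -, hc⟩ := contDiff_succ_iff_deriv.mp h2
    exact ⟨hd, hc.differentiable (by simp)⟩
  have hdd₂ : Differentiable ℝ r₂ ∧ Differentiable ℝ (deriv r₂) := by
    have h2 : ContDiff ℝ ((1:ℕ) + 1) r₂ := by exact_mod_cast hr₂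
    obtain ⟨hd, -, hc⟩ := contDiff_succ_iff_deriv.mp h2
    exact ⟨hd, hc.differentiable (by simp)⟩
  obtain ⟨hd₁, hd₁'⟩ := hdd₁
  obtain ⟨hd₂, hd₂'⟩ := hdd₂
  set W0 : ℝ := W1 (μ₁ 0) (μ₂ 0) with hW0def
  have hW0 : 0 ≤ W0 := W1_nonneg hi₁ hi₂
  set D₀ : ℝ := ‖r₁ 0 - r₂ 0‖ + ‖deriv r₁ 0 - deriv r₂ 0‖ + W0 with hD₀def
  have hD₀ : 0 ≤ D₀ := by positivity
  -- moment difference bound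
  have hmomdiff : ∀ u : ℝ, ‖(∫ q, q ∂(μ₁ u)) - ∫ q, q ∂(μ₂ u)‖
      ≤ g * (‖r₁ u - r₂ u‖ + ‖r₁ 0 - r₂ 0‖) + W0 := by
    intro u
    have h₁ : (∫ q, q ∂(μ₁ u)) = -Gr (r₁ u - r₁ 0) + ∫ q, q ∂(μ₁ 0) := by
      rw [hmap₁ u]; exact moment_map_translate _ hi₁
    have h₂ : (∫ q, q ∂(μ₂ u)) = -Gr (r₂ u - r₂ 0) + ∫ q, q ∂(μ₂ 0) := by
      rw [hmap₂ u]; exact moment_map_translate _ hi₂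
    have hdiff : (∫ q, q ∂(μ₁ u)) - ∫ q, q ∂(μ₂ u)
        = Gr ((r₂ u - r₂ 0) - (r₁ u - r₁ 0)) + ((∫ q, q ∂(μ₁ 0)) - ∫ q, q ∂(μ₂ 0)) := by
      rw [h₁, h₂]
      simp only [map_sub]
      abel
    rw [hdiff]
    have hGr : ‖Gr ((r₂ u - r₂ 0) - (r₁ u - r₁ 0))‖ ≤ g * (‖r₁ u - r₂ u‖ + ‖r₁ 0 - r₂ 0‖) := by
      calc ‖Gr ((r₂ u - r₂ 0) - (r₁ u - r₁ 0))‖ ≤ g * ‖(r₂ u - r₂ 0) - (r₁ u - r₁ 0)‖ :=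
            Gr.le_opNorm _
        _ ≤ g * (‖r₁ u - r₂ u‖ + ‖r₁ 0 - r₂ 0‖) := by
            apply mul_le_mul_of_nonneg_left _ hg0
            have h : (r₂ u - r₂ 0) - (r₁ u - r₁ 0) = (r₂ u - r₁ u) - (r₂ 0 - r₁ 0) := by abel
            rw [h]
            calc ‖(r₂ u - r₁ u) - (r₂ 0 - r₁ 0)‖ ≤ ‖r₂ u - r₁ u‖ + ‖r₂ 0 - r₁ 0‖ :=
                  norm_sub_le _ _
              _ = ‖r₁ u - r₂ u‖ + ‖r₁ 0 - r₂ 0‖ := by rw [norm_sub_rev, norm_sub_rev (r₂ 0)]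
    calc ‖Gr ((r₂ u - r₂ 0) - (r₁ u - r₁ 0)) + ((∫ q, q ∂(μ₁ 0)) - ∫ q, q ∂(μ₂ 0))‖
        ≤ ‖Gr ((r₂ u - r₂ 0) - (r₁ u - r₁ 0))‖ + ‖(∫ q, q ∂(μ₁ 0)) - ∫ q, q ∂(μ₂ 0)‖ :=
          norm_add_le _ _
      _ ≤ g * (‖r₁ u - r₂ u‖ + ‖r₁ 0 - r₂ 0‖) + W0 :=
          add_le_add hGr (moment_diff_le hi₁ hi₂)
  -- the coupled first-order system
  set f : ℝ → E × E := fun u => (r₁ u - r₂ u, deriv r₁ u - deriv r₂ u) with hfdef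
  set f' : ℝ → E × E := fun u =>
    (deriv r₁ u - deriv r₂ u, deriv (deriv r₁) u - deriv (deriv r₂) u) with hf'def
  have hderiv : ∀ u : ℝ, HasDerivAt f (f' u) u := by
    intro u
    exact HasDerivAt.prodMk ((hd₁ u).hasDerivAt.sub (hd₂ u).hasDerivAt)
      ((hd₁' u).hasDerivAt.sub (hd₂' u).hasDerivAt)
  -- second derivative identity
  have hdd : ∀ u : ℝ, deriv (deriv r₁) u - deriv (deriv r₂) u
      = e.symm (-γr (r₁ u - r₂ u) + Nreal • (ContinuousLinearMap.adjoint Gr)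
          (γq ((∫ q, q ∂(μ₁ u)) - ∫ q, q ∂(μ₂ u)))) := by
    intro u
    have h1 : e (deriv (deriv r₁) u - deriv (deriv r₂) u)
        = -γr (r₁ u - r₂ u) + Nreal • (ContinuousLinearMap.adjoint Gr)
            (γq ((∫ q, q ∂(μ₁ u)) - ∫ q, q ∂(μ₂ u))) := by
      rw [map_sub, he, he, hode₁ u, hode₂ u]
      simp only [map_sub, smul_sub]
      abel
    rw [← h1, ContinuousLinearEquiv.symm_apply_apply]
  -- norm bound on f'
  have hbound : ∀ u : ℝ, ‖f' u‖ ≤ K * ‖f u‖ + B * D₀ := by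
    intro u
    have hfu : 0 ≤ ‖f u‖ := norm_nonneg _
    have h1 : ‖r₁ u - r₂ u‖ ≤ ‖f u‖ := le_max_left _ _
    have h2 : ‖deriv r₁ u - deriv r₂ u‖ ≤ ‖f u‖ := le_max_right _ _
    have hε : g * ‖r₁ 0 - r₂ 0‖ + W0 ≤ (g + 1) * D₀ := by
      have h3 : ‖r₁ 0 - r₂ 0‖ ≤ D₀ := by
        have := norm_nonneg (deriv r₁ 0 - deriv r₂ 0)
        rw [hD₀def]; linarith
      have h4 : W0 ≤ D₀ := by
        have := norm_nonneg (r₁ 0 - r₂ 0); have := norm_nonneg (deriv r₁ 0 - deriv r₂ 0)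
        rw [hD₀def]; linarith
      nlinarith
    have hsecond : ‖deriv (deriv r₁) u - deriv (deriv r₂) u‖
        ≤ s * (‖γr‖ + cA * g) * ‖f u‖ + B * D₀ := by
      rw [hdd u]
      set w : EuclideanSpace ℝ (Fin nq) := (∫ q, q ∂(μ₁ u)) - ∫ q, q ∂(μ₂ u) with hw
      have hv : ‖-γr (r₁ u - r₂ u) + Nreal • (ContinuousLinearMap.adjoint Gr) (γq w)‖
          ≤ ‖γr‖ * ‖r₁ u - r₂ u‖ + cA * ‖w‖ := by
        calc ‖-γr (r₁ u - r₂ u) + Nreal • (ContinuousLinearMap.adjoint Gr) (γq w)‖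
            ≤ ‖-γr (r₁ u - r₂ u)‖ + ‖Nreal • (ContinuousLinearMap.adjoint Gr) (γq w)‖ :=
              norm_add_le _ _
          _ = ‖γr (r₁ u - r₂ u)‖ + Nreal * ‖(ContinuousLinearMap.adjoint Gr) (γq w)‖ := by
              rw [norm_neg, norm_smul, Real.norm_eq_abs, abs_of_pos hNreal]
          _ ≤ ‖γr‖ * ‖r₁ u - r₂ u‖ + cA * ‖w‖ := by
              apply add_le_add (γr.le_opNorm _)
              rw [hcA]
              calc Nreal * ‖(ContinuousLinearMap.adjoint Gr) (γq w)‖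
                  ≤ Nreal * (‖ContinuousLinearMap.adjoint Gr‖ * ‖γq w‖) :=
                    mul_le_mul_of_nonneg_left ((ContinuousLinearMap.adjoint Gr).le_opNorm _)
                      hNreal.le
                _ ≤ Nreal * (‖ContinuousLinearMap.adjoint Gr‖ * (‖γq‖ * ‖w‖)) := by
                    apply mul_le_mul_of_nonneg_left _ hNreal.le
                    exact mul_le_mul_of_nonneg_left (γq.le_opNorm _) (norm_nonneg _)
                _ = Nreal * ‖ContinuousLinearMap.adjoint Gr‖ * ‖γq‖ * ‖w‖ := by ring
      have hesymm : ‖e.symm (-γr (r₁ u - r₂ u)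
            + Nreal • (ContinuousLinearMap.adjoint Gr) (γq w))‖
          ≤ s * ‖-γr (r₁ u - r₂ u) + Nreal • (ContinuousLinearMap.adjoint Gr) (γq w)‖ :=
        (e.symm : E →L[ℝ] E).le_opNorm _
      have hwb : ‖w‖ ≤ g * (‖r₁ u - r₂ u‖ + ‖r₁ 0 - r₂ 0‖) + W0 := hmomdiff u
      have hru : ‖r₁ u - r₂ u‖ ≤ ‖f u‖ := h1
      have hr0 : ‖r₁ 0 - r₂ 0‖ ≤ D₀ := by
        have := norm_nonneg (deriv r₁ 0 - deriv r₂ 0)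
        rw [hD₀def]; linarith
      have hW0D : W0 ≤ D₀ := by
        have := norm_nonneg (r₁ 0 - r₂ 0); have := norm_nonneg (deriv r₁ 0 - deriv r₂ 0)
        rw [hD₀def]; linarith
      have hwnn : 0 ≤ ‖w‖ := norm_nonneg _
      calc ‖e.symm (-γr (r₁ u - r₂ u) + Nreal • (ContinuousLinearMap.adjoint Gr) (γq w))‖
          ≤ s * (‖γr‖ * ‖r₁ u - r₂ u‖ + cA * ‖w‖) := by
            exact le_trans hesymm (mul_le_mul_of_nonneg_left hv hs0)
        _ ≤ s * (‖γr‖ + cA * g) * ‖f u‖ + B * D₀ := by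
            rw [hB]
            nlinarith [norm_nonneg γr, mul_le_mul_of_nonneg_left hwb hcA0,
              mul_le_mul_of_nonneg_left hru (norm_nonneg γr),
              mul_le_mul_of_nonneg_left hru (mul_nonneg hcA0 hg0),
              mul_le_mul_of_nonneg_left hr0 (mul_nonneg hcA0 hg0),
              mul_le_mul_of_nonneg_left hW0D hcA0]
    have hnorm : ‖f' u‖
        = max ‖deriv r₁ u - deriv r₂ u‖ ‖deriv (deriv r₁) u - deriv (deriv r₂) u‖ := rfl
    rw [hnorm]
    apply max_le
    · nlinarith [mul_nonneg hB0 hD₀]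
    · have : s * (‖γr‖ + cA * g) * ‖f u‖ ≤ K * ‖f u‖ := by
        apply mul_le_mul_of_nonneg_right _ hfu
        rw [hK]; linarith
      linarith [hsecond]
  -- Grönwall
  have hcont : ContinuousOn f (Set.Icc 0 t) :=
    (((hd₁.continuous.sub hd₂.continuous)).prodMk
      (hd₁'.continuous.sub hd₂'.continuous)).continuousOn
  have hgron := norm_le_gronwallBound_of_norm_deriv_right_le (f := f) (f' := f')
    (δ := ‖f 0‖) (K := K) (ε := B * D₀) (a := 0) (b := t) hcont
    (fun u _ => (hderiv u).hasDerivWithinAt) le_rfl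
    (fun u _ => hbound u) t ⟨ht, le_refl t⟩
  have hf0 : ‖f 0‖ ≤ D₀ := by
    have hnorm0 : ‖f 0‖ = max ‖r₁ 0 - r₂ 0‖ ‖deriv r₁ 0 - deriv r₂ 0‖ := rfl
    rw [hnorm0, hD₀def]
    apply max_le
    · have := norm_nonneg (deriv r₁ 0 - deriv r₂ 0); linarith
    · have := norm_nonneg (r₁ 0 - r₂ 0); linarith
  have hexp1 : 1 ≤ Real.exp (K * t) := by
    rw [← Real.exp_zero]
    exact Real.exp_le_exp.mpr (by positivity)
  have hft : ‖f t‖ ≤ (1 + B / K) * Real.exp (K * t) * D₀ := by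
    have h1 : gronwallBound ‖f 0‖ K (B * D₀) (t - 0)
        = ‖f 0‖ * Real.exp (K * t) + (B * D₀) / K * (Real.exp (K * t) - 1) := by
      rw [gronwallBound_of_K_ne_0 (ne_of_gt hK0)]
      simp
    calc ‖f t‖ ≤ gronwallBound ‖f 0‖ K (B * D₀) (t - 0) := hgron
      _ = ‖f 0‖ * Real.exp (K * t) + (B * D₀) / K * (Real.exp (K * t) - 1) := h1
      _ ≤ D₀ * Real.exp (K * t) + (B * D₀) / K * Real.exp (K * t) := by
          have hq : 0 ≤ (B * D₀) / K := by positivity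
          have he0 : 0 < Real.exp (K * t) := Real.exp_pos _
          nlinarith
      _ = (1 + B / K) * Real.exp (K * t) * D₀ := by field_simp
  -- W1 estimate at time t
  have hW1t : W1 (μ₁ t) (μ₂ t) ≤ W0 + g * (‖r₁ t - r₂ t‖ + ‖r₁ 0 - r₂ 0‖) := by
    apply W1_le
    intro φ hφ
    set a₁ : EuclideanSpace ℝ (Fin nq) := -Gr (r₁ t - r₁ 0) with ha₁
    set a₂ : EuclideanSpace ℝ (Fin nq) := -Gr (r₂ t - r₂ 0) with ha₂
    have hψ₁ : LipschitzWith 1 (fun q => φ (a₁ + q)) := by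
      simpa [Function.comp_def] using hφ.comp (isometry_add_left a₁).lipschitz
    have hψ₂ : LipschitzWith 1 (fun q => φ (a₂ + q)) := by
      simpa [Function.comp_def] using hφ.comp (isometry_add_left a₂).lipschitz
    have heq1 : (∫ q, φ q ∂(μ₁ t)) = ∫ q, φ (a₁ + q) ∂(μ₁ 0) := by
      rw [hmap₁ t]; exact integral_map_translate a₁ φ hφ.continuous
    have heq2 : (∫ q, φ q ∂(μ₂ t)) = ∫ q, φ (a₂ + q) ∂(μ₂ 0) := by
      rw [hmap₂ t]; exact integral_map_translate a₂ φ hφ.continuous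
    rw [heq1, heq2]
    have hint₁ : Integrable (fun q => φ (a₁ + q)) (μ₁ 0) := lip_integrable hi₁ hψ₁
    have hint₂ : Integrable (fun q => φ (a₂ + q)) (μ₁ 0) := lip_integrable hi₁ hψ₂
    have haa : ‖a₁ - a₂‖ ≤ g * (‖r₁ t - r₂ t‖ + ‖r₁ 0 - r₂ 0‖) := by
      have hid : a₁ - a₂ = Gr ((r₂ t - r₂ 0) - (r₁ t - r₁ 0)) := by
        rw [ha₁, ha₂]
        simp only [map_sub]
        abel
      rw [hid]
      calc ‖Gr ((r₂ t - r₂ 0) - (r₁ t - r₁ 0))‖ ≤ g * ‖(r₂ t - r₂ 0) - (r₁ t - r₁ 0)‖ :=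
            Gr.le_opNorm _
        _ ≤ g * (‖r₁ t - r₂ t‖ + ‖r₁ 0 - r₂ 0‖) := by
            apply mul_le_mul_of_nonneg_left _ hg0
            have h : (r₂ t - r₂ 0) - (r₁ t - r₁ 0) = (r₂ t - r₁ t) - (r₂ 0 - r₁ 0) := by abel
            rw [h]
            calc ‖(r₂ t - r₁ t) - (r₂ 0 - r₁ 0)‖ ≤ ‖r₂ t - r₁ t‖ + ‖r₂ 0 - r₁ 0‖ :=
                  norm_sub_le _ _
              _ = ‖r₁ t - r₂ t‖ + ‖r₁ 0 - r₂ 0‖ := by rw [norm_sub_rev, norm_sub_rev (r₂ 0)]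
    have hterm1 : |(∫ q, φ (a₁ + q) ∂(μ₁ 0)) - ∫ q, φ (a₂ + q) ∂(μ₁ 0)| ≤ ‖a₁ - a₂‖ := by
      rw [← integral_sub hint₁ hint₂]
      calc |∫ q, (φ (a₁ + q) - φ (a₂ + q)) ∂(μ₁ 0)|
          ≤ ∫ q, |φ (a₁ + q) - φ (a₂ + q)| ∂(μ₁ 0) := by
            simpa [Real.norm_eq_abs] using
              norm_integral_le_integral_norm (fun q => φ (a₁ + q) - φ (a₂ + q)) (μ := μ₁ 0)
        _ ≤ ∫ _, ‖a₁ - a₂‖ ∂(μ₁ 0) := by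
            apply integral_mono (hint₁.sub hint₂).abs (integrable_const _)
            intro q
            have h := hφ.dist_le_mul (a₁ + q) (a₂ + q)
            have h2 : dist (a₁ + q) (a₂ + q) = ‖a₁ - a₂‖ := by
              rw [dist_eq_norm]
              congr 1
              abel
            rw [Real.dist_eq, h2] at h
            simpa using h
        _ = ‖a₁ - a₂‖ := by simp
    have hterm2 : |(∫ q, φ (a₂ + q) ∂(μ₁ 0)) - ∫ q, φ (a₂ + q) ∂(μ₂ 0)| ≤ W0 :=
      le_W1 hi₁ hi₂ hψ₂
    calc |(∫ q, φ (a₁ + q) ∂(μ₁ 0)) - ∫ q, φ (a₂ + q) ∂(μ₂ 0)|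
        ≤ |(∫ q, φ (a₁ + q) ∂(μ₁ 0)) - ∫ q, φ (a₂ + q) ∂(μ₁ 0)|
          + |(∫ q, φ (a₂ + q) ∂(μ₁ 0)) - ∫ q, φ (a₂ + q) ∂(μ₂ 0)| :=
          abs_sub_le _ _ _
      _ ≤ ‖a₁ - a₂‖ + W0 := add_le_add hterm1 hterm2
      _ ≤ W0 + g * (‖r₁ t - r₂ t‖ + ‖r₁ 0 - r₂ 0‖) := by linarith [haa]
  -- final assembly
  have hΔt : ‖r₁ t - r₂ t‖ ≤ ‖f t‖ := le_max_left _ _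
  have hΔ't : ‖deriv r₁ t - deriv r₂ t‖ ≤ ‖f t‖ := le_max_right _ _
  have hr0D : ‖r₁ 0 - r₂ 0‖ ≤ D₀ := by
    have := norm_nonneg (deriv r₁ 0 - deriv r₂ 0)
    rw [hD₀def]; linarith
  have hW0D : W0 ≤ D₀ := by
    have := norm_nonneg (r₁ 0 - r₂ 0); have := norm_nonneg (deriv r₁ 0 - deriv r₂ 0)
    rw [hD₀def]; linarith
  have step1 : ‖r₁ t - r₂ t‖ + ‖deriv r₁ t - deriv r₂ t‖ + W1 (μ₁ t) (μ₂ t)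
      ≤ (2 + g) * ‖f t‖ + (1 + g) * D₀ := by
    have m1 : g * ‖r₁ t - r₂ t‖ ≤ g * ‖f t‖ := mul_le_mul_of_nonneg_left hΔt hg0
    have m2 : g * ‖r₁ 0 - r₂ 0‖ ≤ g * D₀ := mul_le_mul_of_nonneg_left hr0D hg0
    calc ‖r₁ t - r₂ t‖ + ‖deriv r₁ t - deriv r₂ t‖ + W1 (μ₁ t) (μ₂ t)
        ≤ ‖f t‖ + ‖f t‖ + (W0 + (g * ‖r₁ t - r₂ t‖ + g * ‖r₁ 0 - r₂ 0‖)) := by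
          have := hW1t
          rw [mul_add] at this
          linarith [hΔt, hΔ't]
      _ ≤ ‖f t‖ + ‖f t‖ + (D₀ + (g * ‖f t‖ + g * D₀)) := by linarith [m1, m2, hW0D]
      _ = (2 + g) * ‖f t‖ + (1 + g) * D₀ := by ring
  have step2 : (2 + g) * ‖f t‖ ≤ (2 + g) * ((1 + B / K) * Real.exp (K * t) * D₀) := by
    apply mul_le_mul_of_nonneg_left hft (by linarith)
  have step3 : (1 + g) * D₀ ≤ (1 + g) * Real.exp (K * t) * D₀ := by
    calc (1 + g) * D₀ = (1 + g) * (1 * D₀) := by ring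
      _ ≤ (1 + g) * (Real.exp (K * t) * D₀) :=
          mul_le_mul_of_nonneg_left (mul_le_mul_of_nonneg_right hexp1 hD₀) (by linarith)
      _ = (1 + g) * Real.exp (K * t) * D₀ := by ring
  calc ‖r₁ t - r₂ t‖ + ‖deriv r₁ t - deriv r₂ t‖ + W1 (μ₁ t) (μ₂ t)
      ≤ (2 + g) * ‖f t‖ + (1 + g) * D₀ := step1
    _ ≤ (2 + g) * ((1 + B / K) * Real.exp (K * t) * D₀) + (1 + g) * Real.exp (K * t) * D₀ := by
        exact add_le_add step2 step3
    _ = C * Real.exp (K * t) * D₀ := by rw [hC]; ring
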